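/- Let ε, δ ∈ (0,1) and let λ, b ≥ 1 be integers with λ ≤ d. If M ∈ ℝ^{m×d} is a random matrix that is a (λ, ε, δ/b)-Oblivious Subspace Embedding, then the block-diagonal matrix I_b ⊗ M ∈ ℝ^{mb×db} (equal, up to permutations of the rows and columns, to M ⊗ I_b) is a (λ, ε, δ)-Oblivious Subspace Embedding, where I_b is the b×b identity matrix and ⊗ is the Kronecker product. -/

import Mathlib

open MeasureTheory ProbabilityTheory Real
open scoped ENNReal NNReal

noncomputable section

instance matrixMeasurableSpace {ι κ : Type*} : MeasurableSpace (Matrix ι κ ℝ) :=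
  MeasurableSpace.pi

/-- `‖X‖_p = (𝔼 |X|^p)^(1/p)`, the `p`-th moment norm of a real random variable. -/
def pmom {Ω : Type*} [MeasureSpace Ω] (p : ℝ) (X : Ω → ℝ) : ℝ :=
  (∫ ω, |X ω| ^ p) ^ (1 / p)

/-- Squared Euclidean norm `‖x‖₂²` of a finitely supported real vector. -/
def sqNorm {ι : Type*} [Fintype ι] (x : ι → ℝ) : ℝ := ∑ i, x i ^ 2

/-- Euclidean norm `‖x‖₂`. -/
def l2norm {ι : Type*} [Fintype ι] (x : ι → ℝ) : ℝ := Real.sqrt (sqNorm x)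

/-- Frobenius norm of a matrix. -/
def frobNorm {ι κ : Type*} [Fintype ι] [Fintype κ] (A : Matrix ι κ ℝ) : ℝ :=
  Real.sqrt (∑ i, ∑ j, A i j ^ 2)

/-- Operator (spectral) norm of a matrix. -/
def opNorm {ι κ : Type*} [Fintype ι] [Fintype κ] (A : Matrix ι κ ℝ) : ℝ :=
  sSup ((fun x => l2norm (A.mulVec x)) '' {x | l2norm x ≤ 1})

/-- The Strong `(ε,δ)`-JL Moment Property of a random matrix. -/
def StrongJL {Ω : Type*} [MeasureSpace Ω] {ι κ : Type*} [Fintype ι] [Fintype κ]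
    (ε δ : ℝ) (M : Ω → Matrix ι κ ℝ) : Prop :=
  ∀ x : κ → ℝ, sqNorm x = 1 →
    (∫ ω, sqNorm ((M ω).mulVec x)) = 1 ∧
    ∀ p : ℝ, 2 ≤ p → p ≤ Real.log (1 / δ) →
      pmom p (fun ω => sqNorm ((M ω).mulVec x) - 1)
        ≤ ε / Real.exp 1 * Real.sqrt (p / Real.log (1 / δ))

/-- The `(ε,δ,p)`-JL Moment Property of a random matrix. -/
def JLMoment {Ω : Type*} [MeasureSpace Ω] {ι κ : Type*} [Fintype ι] [Fintype κ]
    (ε δ p : ℝ) (M : Ω → Matrix ι κ ℝ) : Prop :=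
  ∀ x : κ → ℝ, sqNorm x = 1 →
    pmom p (fun ω => sqNorm ((M ω).mulVec x) - 1) ≤ ε * δ ^ (1 / p)

/-- `(λ,ε,δ)`-Oblivious Subspace Embedding. -/
def OSE {Ω : Type*} [MeasureSpace Ω] {ι κ : Type*} [Fintype ι] [Fintype κ]
    (lam : ℕ) (ε δ : ℝ) (M : Ω → Matrix ι κ ℝ) : Prop :=
  ∀ V : Submodule ℝ (κ → ℝ), Module.finrank ℝ V = lam →
    ENNReal.ofReal (1 - δ) ≤
      volume {ω | ∀ x ∈ V, |l2norm ((M ω).mulVec x) - l2norm x| ≤ ε * l2norm x}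

/-- The law of a Rademacher random variable: uniform on `{-1, 1}`. -/
def radMeasure : Measure ℝ :=
  (2 : ℝ≥0∞)⁻¹ • Measure.dirac 1 + (2 : ℝ≥0∞)⁻¹ • Measure.dirac (-1)


section Aux

open Module

/-- Any subspace of a finite-dimensional space can be enlarged to a subspace of any
given dimension between its own dimension and that of the whole space. -/
lemma exists_superset_finrank_eq {E : Type*} [AddCommGroup E] [Module ℝ E]
    [FiniteDimensional ℝ E] (n : ℕ) :
    ∀ V : Submodule ℝ E, finrank ℝ V ≤ n → n ≤ finrank ℝ E →
      ∃ W : Submodule ℝ E, V ≤ W ∧ finrank ℝ W = n := by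
  induction n with
  | zero => exact fun V h _ => ⟨V, le_rfl, le_antisymm h (Nat.zero_le _)⟩
  | succ n ih =>
    intro V h hn
    rcases eq_or_lt_of_le h with heq | hlt
    · exact ⟨V, le_rfl, heq⟩
    · obtain ⟨W, hVW, hW⟩ := ih V (Nat.lt_succ_iff.mp hlt) (le_trans (Nat.le_succ n) hn)
      have hWlt : finrank ℝ W < finrank ℝ E := by
        rw [hW]; exact lt_of_lt_of_le (Nat.lt_succ_self n) hn
      obtain ⟨v, hv⟩ := Submodule.exists_of_finrank_lt W hWlt
      have hv1 : v ∉ W := by simpa using hv 1 one_ne_zero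
      have hv0 : v ≠ 0 := fun h0 => hv1 (h0 ▸ W.zero_mem)
      refine ⟨W ⊔ (ℝ ∙ v), le_trans hVW le_sup_left, ?_⟩
      have hdisj : Disjoint W (ℝ ∙ v) :=
        (Submodule.disjoint_span_singleton' hv0).mpr hv1
      have := Submodule.finrank_sup_add_finrank_inf_eq W (ℝ ∙ v)
      rw [hdisj.eq_bot, finrank_bot, add_zero, hW, finrank_span_singleton hv0] at this
      exact this

instance matrixBorelSpace {m d : ℕ} : BorelSpace (Matrix (Fin m) (Fin d) ℝ) :=
  inferInstanceAs (BorelSpace (Fin m → Fin d → ℝ))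

lemma continuous_l2norm_mulVec {m d : ℕ} (x : Fin d → ℝ) :
    Continuous fun A : Matrix (Fin m) (Fin d) ℝ => l2norm (A.mulVec x) := by
  apply Real.continuous_sqrt.comp
  apply continuous_finset_sum
  intro j _
  have : Continuous fun A : Matrix (Fin m) (Fin d) ℝ => (A.mulVec x) j := by
    simp only [Matrix.mulVec, dotProduct]
    exact continuous_finset_sum _ fun l _ =>
      (((continuous_apply l).comp (continuous_apply j : Continuous fun A : Matrix (Fin m) (Fin d) ℝ => A j)).mul continuous_const :)
  exact this.pow 2

lemma isClosed_embedSet {m d : ℕ} (ε : ℝ) (W : Submodule ℝ (Fin d → ℝ)) :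
    IsClosed {A : Matrix (Fin m) (Fin d) ℝ |
      ∀ x ∈ W, |l2norm (A.mulVec x) - l2norm x| ≤ ε * l2norm x} := by
  have : {A : Matrix (Fin m) (Fin d) ℝ |
      ∀ x ∈ W, |l2norm (A.mulVec x) - l2norm x| ≤ ε * l2norm x}
      = ⋂ x ∈ (W : Set (Fin d → ℝ)),
        {A | |l2norm (A.mulVec x) - l2norm x| ≤ ε * l2norm x} := by
    ext A; simp [Set.mem_iInter]
  rw [this]
  refine isClosed_biInter fun x _ => ?_
  exact isClosed_le (((continuous_l2norm_mulVec x).sub continuous_const).abs) continuous_const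

lemma sqNorm_nonneg {ι : Type*} [Fintype ι] (x : ι → ℝ) : 0 ≤ sqNorm x :=
  Finset.sum_nonneg fun i _ => sq_nonneg _

lemma l2norm_nonneg {ι : Type*} [Fintype ι] (x : ι → ℝ) : 0 ≤ l2norm x :=
  Real.sqrt_nonneg _

/-- the key norm aggregation: per-block distortion bounds give a global bound. -/
lemma block_norm_bound {ι : Type*} [Fintype ι] (ε : ℝ) (hε0 : 0 ≤ ε) (hε1 : ε ≤ 1)
    (a c : ι → ℝ) (ha : ∀ i, 0 ≤ a i) (hc : ∀ i, 0 ≤ c i)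
    (h : ∀ i, |Real.sqrt (c i) - Real.sqrt (a i)| ≤ ε * Real.sqrt (a i)) :
    |Real.sqrt (∑ i, c i) - Real.sqrt (∑ i, a i)| ≤ ε * Real.sqrt (∑ i, a i) := by
  have hA : (0:ℝ) ≤ ∑ i, a i := Finset.sum_nonneg fun i _ => ha i
  have hC : (0:ℝ) ≤ ∑ i, c i := Finset.sum_nonneg fun i _ => hc i
  have key : ∀ i, (1 - ε)^2 * a i ≤ c i ∧ c i ≤ (1 + ε)^2 * a i := by
    intro i
    obtain ⟨h1, h2⟩ := abs_le.mp (h i)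
    have hl : (1 - ε) * Real.sqrt (a i) ≤ Real.sqrt (c i) := by nlinarith [Real.sqrt_nonneg (a i)]
    have hr : Real.sqrt (c i) ≤ (1 + ε) * Real.sqrt (a i) := by nlinarith [Real.sqrt_nonneg (a i)]
    have hsa : Real.sqrt (a i) ^ 2 = a i := Real.sq_sqrt (ha i)
    have hsc : Real.sqrt (c i) ^ 2 = c i := Real.sq_sqrt (hc i)
    have h1e : 0 ≤ (1 - ε) * Real.sqrt (a i) :=
      mul_nonneg (sub_nonneg.mpr hε1) (Real.sqrt_nonneg (a i))
    constructor
    · nlinarith [mul_self_le_mul_self h1e hl]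
    · nlinarith [mul_self_le_mul_self (Real.sqrt_nonneg (c i)) hr, Real.sqrt_nonneg (a i)]
  have hsum1 : (1 - ε)^2 * (∑ i, a i) ≤ ∑ i, c i := by
    rw [Finset.mul_sum]; exact Finset.sum_le_sum fun i _ => (key i).1
  have hsum2 : (∑ i, c i) ≤ (1 + ε)^2 * (∑ i, a i) := by
    rw [Finset.mul_sum]; exact Finset.sum_le_sum fun i _ => (key i).2
  have hsA : Real.sqrt (∑ i, a i) ^ 2 = ∑ i, a i := Real.sq_sqrt hA
  have hsC : Real.sqrt (∑ i, c i) ^ 2 = ∑ i, c i := Real.sq_sqrt hC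
  have hl : (1 - ε) * Real.sqrt (∑ i, a i) ≤ Real.sqrt (∑ i, c i) := by
    have h1e : 0 ≤ (1 - ε) * Real.sqrt (∑ i, a i) :=
      mul_nonneg (sub_nonneg.mpr hε1) (Real.sqrt_nonneg _)
    nlinarith [Real.sqrt_nonneg (∑ i, c i)]
  have hr : Real.sqrt (∑ i, c i) ≤ (1 + ε) * Real.sqrt (∑ i, a i) := by
    nlinarith [Real.sqrt_nonneg (∑ i, c i), Real.sqrt_nonneg (∑ i, a i),
      mul_nonneg (add_nonneg zero_le_one hε0) (Real.sqrt_nonneg (∑ i, a i))]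
  rw [abs_le]; constructor <;> nlinarith

/-- action of `I ⊗ M` on a vector, blockwise. -/
lemma kron_one_mulVec {b m d : ℕ} (M : Matrix (Fin m) (Fin d) ℝ)
    (x : Fin b × Fin d → ℝ) (i : Fin b) (j : Fin m) :
    (Matrix.kronecker (1 : Matrix (Fin b) (Fin b) ℝ) M).mulVec x (i, j)
      = M.mulVec (fun l => x (i, l)) j := by
  simp only [Matrix.mulVec, dotProduct, Matrix.kronecker, Matrix.kroneckerMap_apply,
    Matrix.one_apply]
  rw [Fintype.sum_prod_type]
  rw [Finset.sum_eq_single i]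
  · simp
  · intro k _ hk
    simp [Ne.symm hk]
  · simp

lemma sqNorm_kron_one_mulVec {b m d : ℕ} (M : Matrix (Fin m) (Fin d) ℝ)
    (x : Fin b × Fin d → ℝ) :
    sqNorm ((Matrix.kronecker (1 : Matrix (Fin b) (Fin b) ℝ) M).mulVec x)
      = ∑ i : Fin b, sqNorm (M.mulVec fun l => x (i, l)) := by
  simp only [sqNorm]
  rw [Fintype.sum_prod_type]
  exact Finset.sum_congr rfl fun i _ => Finset.sum_congr rfl fun j _ => by
    rw [kron_one_mulVec]

lemma sqNorm_prod_split {b d : ℕ} (x : Fin b × Fin d → ℝ) :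
    sqNorm x = ∑ i : Fin b, sqNorm (fun l => x (i, l)) := by
  simp only [sqNorm]
  rw [Fintype.sum_prod_type]

end Aux

/-- a direct sum (block diagonal Kronecker product with the
identity) of an oblivious subspace embedding is an oblivious subspace
embedding, with failure probability multiplied by the number of blocks. -/
theorem ose_direct_sum
    {Ω : Type*} [MeasureSpace Ω] [IsProbabilityMeasure (volume : Measure Ω)]
    (ε δ : ℝ) (hε : ε ∈ Set.Ioo (0 : ℝ) 1) (hδ : δ ∈ Set.Ioo (0 : ℝ) 1)
    (lam b : ℕ) (hlam : 1 ≤ lam) (hb : 1 ≤ b)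
    (m d : ℕ) (hd : lam ≤ d)
    (M : Ω → Matrix (Fin m) (Fin d) ℝ)
    (hMmeas : Measurable M)
    (hM : OSE lam ε (δ / b) M) :
    OSE lam ε δ (fun ω => Matrix.kronecker (1 : Matrix (Fin b) (Fin b) ℝ) (M ω)) := by
  intro V hV
  classical
  have hε0 : (0:ℝ) < ε := hε.1
  have hε1 : ε < 1 := hε.2
  have hδ0 : (0:ℝ) < δ := hδ.1
  have hδ1 : δ < 1 := hδ.2
  have hb0 : (0:ℝ) < (b:ℝ) := by exact_mod_cast Nat.pos_of_ne_zero (by omega)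
  -- projections
  set proj : Fin b → ((Fin b × Fin d → ℝ) →ₗ[ℝ] (Fin d → ℝ)) :=
    fun i => LinearMap.funLeft ℝ ℝ (fun l : Fin d => (i, l)) with hproj
  -- enlarged subspaces of dimension exactly lam
  have hWex : ∀ i : Fin b, ∃ W : Submodule ℝ (Fin d → ℝ),
      V.map (proj i) ≤ W ∧ Module.finrank ℝ W = lam := by
    intro i
    apply exists_superset_finrank_eq
    · calc Module.finrank ℝ (V.map (proj i)) ≤ Module.finrank ℝ V :=
            Submodule.finrank_map_le _ _
        _ = lam := hV
    · rw [Module.finrank_fin_fun]; exact hd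
  choose W hWle hWrank using hWex
  -- the good events
  set A : Fin b → Set Ω := fun i =>
    {ω | ∀ x ∈ W i, |l2norm ((M ω).mulVec x) - l2norm x| ≤ ε * l2norm x} with hA
  have hAmeas : ∀ i, MeasurableSet (A i) := by
    intro i
    have : A i = M ⁻¹' {B : Matrix (Fin m) (Fin d) ℝ |
        ∀ x ∈ W i, |l2norm (B.mulVec x) - l2norm x| ≤ ε * l2norm x} := rfl
    rw [this]
    exact hMmeas (isClosed_embedSet ε (W i)).measurableSet
  have hAprob : ∀ i, ENNReal.ofReal (1 - δ / b) ≤ volume (A i) :=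
    fun i => hM (W i) (hWrank i)
  have hδb0 : (0:ℝ) ≤ δ / b := le_of_lt (div_pos hδ0 hb0)
  have hδb1 : δ / b ≤ 1 := by
    rw [div_le_one hb0]
    calc δ ≤ 1 := le_of_lt hδ1
      _ ≤ (b:ℝ) := by exact_mod_cast hb
  -- union bound
  have hcompl : ∀ i, volume ((A i)ᶜ) ≤ ENNReal.ofReal (δ / b) := by
    intro i
    rw [prob_compl_eq_one_sub (hAmeas i)]
    calc (1:ℝ≥0∞) - volume (A i) ≤ 1 - ENNReal.ofReal (1 - δ / b) :=
          tsub_le_tsub_left (hAprob i) 1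
      _ = ENNReal.ofReal (δ / b) := by
          rw [← ENNReal.ofReal_one,
            ← ENNReal.ofReal_sub _ (by linarith : (0:ℝ) ≤ 1 - δ / b)]
          congr 1
          ring
  have hIcompl : volume ((⋂ i, A i)ᶜ) ≤ ENNReal.ofReal δ := by
    rw [Set.compl_iInter]
    calc volume (⋃ i, (A i)ᶜ) ≤ ∑ i : Fin b, volume ((A i)ᶜ) :=
          measure_iUnion_fintype_le volume _
      _ ≤ ∑ _i : Fin b, ENNReal.ofReal (δ / b) :=
          Finset.sum_le_sum fun i _ => hcompl i
      _ = (b : ℝ≥0∞) * ENNReal.ofReal (δ / b) := by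
          rw [Finset.sum_const, Finset.card_univ, Fintype.card_fin, nsmul_eq_mul]
      _ = ENNReal.ofReal ((b : ℝ) * (δ / b)) := by
          rw [ENNReal.ofReal_mul (le_of_lt hb0), ENNReal.ofReal_natCast]
      _ = ENNReal.ofReal δ := by
          rw [mul_comm, div_mul_cancel₀ _ (ne_of_gt hb0)]
  have hImeas : MeasurableSet (⋂ i, A i) := MeasurableSet.iInter fun i => hAmeas i
  have hIprob : ENNReal.ofReal (1 - δ) ≤ volume (⋂ i, A i) := by
    have h1 : volume (⋂ i, A i) = 1 - volume ((⋂ i, A i)ᶜ) := by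
      conv_lhs => rw [← compl_compl (⋂ i, A i)]
      rw [prob_compl_eq_one_sub hImeas.compl]
    rw [h1]
    calc ENNReal.ofReal (1 - δ)
        = ENNReal.ofReal 1 - ENNReal.ofReal δ := by
          rw [ENNReal.ofReal_sub _ (le_of_lt hδ0)]
      _ = 1 - ENNReal.ofReal δ := by rw [ENNReal.ofReal_one]
      _ ≤ 1 - volume ((⋂ i, A i)ᶜ) := tsub_le_tsub_left hIcompl 1
  -- inclusion of events
  refine le_trans hIprob (measure_mono ?_)
  intro ω hω
  simp only [Set.mem_iInter] at hω
  intro x hx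
  -- blockwise distortion
  have hblock : ∀ i : Fin b,
      |Real.sqrt (sqNorm ((M ω).mulVec fun l => x (i, l)))
        - Real.sqrt (sqNorm (fun l => x (i, l)))|
      ≤ ε * Real.sqrt (sqNorm (fun l => x (i, l))) := by
    intro i
    have hxi : (fun l => x (i, l)) ∈ W i := hWle i ⟨x, hx, rfl⟩
    exact hω i _ hxi
  have := block_norm_bound ε (le_of_lt hε0) (le_of_lt hε1)
    (fun i => sqNorm (fun l => x (i, l)))
    (fun i => sqNorm ((M ω).mulVec fun l => x (i, l)))
    (fun i => sqNorm_nonneg _) (fun i => sqNorm_nonneg _) hblock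
  simp only [l2norm]
  rw [sqNorm_kron_one_mulVec, sqNorm_prod_split x]
  exact this
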